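/- Let f ∈ Γ₀(H) with int dom f ≠ ∅, Gâteaux differentiable on int dom f and essentially strictly convex. Let C ⊆ H be closed convex with C ∩ int dom f ≠ ∅ and let (x_k) in int dom f be forward Bregman monotone with respect to C. Then (x_k) converges weakly to a point in C ∩ int dom f if and only if all weak sequential cluster points of (x_k) lie in C ∩ int dom f. -/

import Mathlib

open Filter Topology
open scoped RealInnerProductSpace

variable {H : Type*} [NormedAddCommGroup H] [InnerProductSpace ℝ H] [CompleteSpace H]

/-- Gâteaux differentiability of `f` at `x` with Gâteaux gradient `u`. -/
def GateauxAt (f : H → ℝ) (u x : H) : Prop :=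
  ∀ v : H, Tendsto (fun t : ℝ => (f (x + t • v) - f x) / t) (𝓝[≠] (0:ℝ)) (𝓝 ⟪u, v⟫)

/-- The Bregman distance associated with `f` (with gradient `g`), as a real number,
for `x` in the domain and `y` in the interior of the domain. -/
noncomputable def bregD (f : H → ℝ) (g : H → H) (x y : H) : ℝ :=
  f x - f y - ⟪g y, x - y⟫

/-- The subdifferential of `f` (viewed as `+∞` outside `dom`) at `x`. -/
def subdiff (f : H → ℝ) (dom : Set H) (x : H) : Set H :=
  {u : H | x ∈ dom ∧ ∀ y ∈ dom, f x + ⟪u, y - x⟫ ≤ f y}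

/-- `f` is essentially strictly convex: `(∂f)⁻¹` is locally bounded on its domain and
`f` is strictly convex on every convex subset of `dom ∂f`. -/
def EssStrictConvex (f : H → ℝ) (dom : Set H) : Prop :=
  (∀ u : H, {x : H | u ∈ subdiff f dom x}.Nonempty →
      ∃ δ : ℝ, 0 < δ ∧
        Bornology.IsBounded {x : H | ∃ v ∈ Metric.closedBall u δ, v ∈ subdiff f dom x}) ∧
  ∀ s : Set H, s ⊆ {x : H | (subdiff f dom x).Nonempty} → Convex ℝ s → StrictConvexOn ℝ s f

/-- A sequence `x` in `interior dom` is forward Bregman monotone with respect to `C`. -/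
def FwdBregmanMono (f : H → ℝ) (g : H → H) (dom C : Set H) (x : ℕ → H) : Prop :=
  (C ∩ interior dom).Nonempty ∧ (∀ k : ℕ, x k ∈ interior dom) ∧
    ∀ c ∈ C ∩ interior dom, ∀ k : ℕ, bregD f g (x (k+1)) c ≤ bregD f g (x k) c

/-- Weak convergence of a sequence in a Hilbert space. -/
def WeakLim (x : ℕ → H) (p : H) : Prop :=
  ∀ u : H, Tendsto (fun k => ⟪x k, u⟫) atTop (𝓝 ⟪p, u⟫)

lemma gateaux_tendsto_right {f : H → ℝ} {u z : H} (hg : GateauxAt f u z) (v : H) :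
    Tendsto (fun t : ℝ => (f (z + t • v) - f z) / t) (𝓝[>] 0) (𝓝 ⟪u, v⟫) :=
  (hg v).mono_left (nhdsWithin_mono _ (fun t ht => ne_of_gt ht))

lemma gateaux_subgrad {f : H → ℝ} {dom : Set H}
    (hconv : ConvexOn ℝ dom f)
    {u z : H} (hz : z ∈ dom) (hg : GateauxAt f u z) :
    ∀ y ∈ dom, f z + ⟪u, y - z⟫ ≤ f y := by
  intro y hy
  have key := gateaux_tendsto_right hg (y - z)
  have hbd : ∀ᶠ t in 𝓝[>] (0:ℝ), (f (z + t • (y - z)) - f z) / t ≤ f y - f z := by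
    filter_upwards [Ioc_mem_nhdsGT_of_mem (Set.mem_Ico.2 ⟨le_refl (0:ℝ), one_pos⟩)]
      with t ht
    obtain ⟨ht0, ht1⟩ := ht
    have hmem : z + t • (y - z) = (1 - t) • z + t • y := by
      rw [smul_sub, sub_smul, one_smul]; abel
    have hf : f (z + t • (y - z)) ≤ (1 - t) * f z + t * f y := by
      rw [hmem]
      exact hconv.2 hz hy (by linarith) (le_of_lt ht0) (by ring)
    rw [div_le_iff₀ ht0]
    nlinarith
  have := le_of_tendsto key hbd
  linarith


lemma ekeland_aux {h : H → ℝ} {X : Set H} {m : H} {b ε lam : ℝ}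
    (hXc : IsClosed X) (hm : m ∈ X)
    (hlsc : ∀ w ∈ X, LowerSemicontinuousWithinAt h X w)
    (hb : ∀ y ∈ X, b ≤ h y) (hε : 0 < ε) (hlam : 0 < lam)
    (hmb : h m ≤ b + ε * lam) :
    ∃ z ∈ X, ‖z - m‖ ≤ lam ∧ ∀ y ∈ X, h z ≤ h y + ε * ‖y - z‖ := by
  classical
  set S : H → Set H := fun w => {y ∈ X | h y + ε * ‖y - w‖ ≤ h w} with hS
  have hSsub : ∀ w, S w ⊆ X := fun w y hy => hy.1
  have hself : ∀ w ∈ X, w ∈ S w := by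
    intro w hw; refine ⟨hw, ?_⟩; simp
  have hbdd : ∀ w, BddBelow (h '' S w) := by
    intro w; exact ⟨b, fun r ⟨y, hy, hyr⟩ => hyr ▸ hb y (hSsub w hy)⟩
  have hstep : ∀ n : ℕ, ∀ w ∈ X, ∃ y, y ∈ S w ∧ h y ≤ sInf (h '' S w) + (1/2)^n := by
    intro n w hw
    have hne : (h '' S w).Nonempty := ⟨h w, w, hself w hw, rfl⟩
    obtain ⟨r, ⟨y, hy, rfl⟩, hr⟩ := Real.lt_sInf_add_pos hne (by positivity : (0:ℝ) < (1/2)^n)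
    exact ⟨y, hy, hr.le⟩
  -- the recursive sequence
  let F : ℕ → {w // w ∈ X} → {w // w ∈ X} := fun n w =>
    ⟨(hstep n w.1 w.2).choose, hSsub _ (hstep n w.1 w.2).choose_spec.1⟩
  let u : ℕ → {w // w ∈ X} := fun n => Nat.rec ⟨m, hm⟩ F n
  set z : ℕ → H := fun n => (u n).1 with hz
  have hz0 : z 0 = m := rfl
  have hzX : ∀ n, z n ∈ X := fun n => (u n).2
  have h1 : ∀ n, z (n+1) ∈ S (z n) := fun n => (hstep n (z n) (hzX n)).choose_spec.1
  have h2 : ∀ n, h (z (n+1)) ≤ sInf (h '' S (z n)) + (1/2)^n :=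
    fun n => (hstep n (z n) (hzX n)).choose_spec.2
  have h3 : ∀ n, h (z (n+1)) + ε * ‖z (n+1) - z n‖ ≤ h (z n) := fun n => (h1 n).2
  have hanti : Antitone fun n => h (z n) := by
    apply antitone_nat_of_succ_le
    intro n
    have := h3 n
    nlinarith [norm_nonneg (z (n+1) - z n), hε.le]
  have htel : ∀ n k, n ≤ k → h (z k) + ε * ‖z k - z n‖ ≤ h (z n) := by
    intro n k hnk
    induction k, hnk using Nat.le_induction with
    | base => simp
    | succ k hnk ih =>
      have t1 := h3 k
      have tri : ‖z (k+1) - z n‖ ≤ ‖z (k+1) - z k‖ + ‖z k - z n‖ := by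
        simpa using norm_sub_le_norm_sub_add_norm_sub (z (k+1)) (z k) (z n)
      nlinarith [hε.le]
  -- convergence of h ∘ z
  have hbddB : BddBelow (Set.range fun n => h (z n)) :=
    ⟨b, fun r ⟨n, hn⟩ => hn ▸ hb _ (hzX n)⟩
  set L := ⨅ n, h (z n) with hL
  have hLtend : Tendsto (fun n => h (z n)) atTop (𝓝 L) := tendsto_atTop_ciInf hanti hbddB
  have hLle : ∀ n, L ≤ h (z n) := fun n => ciInf_le hbddB n
  -- Cauchy
  have hcauchy : CauchySeq z := by
    rw [Metric.cauchySeq_iff']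
    intro r hr
    obtain ⟨N, hN⟩ := (Metric.tendsto_atTop.1 hLtend) (ε * r) (by positivity)
    refine ⟨N, fun n hn => ?_⟩
    have := htel N n hn
    have h4 : h (z N) - L < ε * r := by
      have := hN N le_rfl
      rw [Real.dist_eq, abs_lt] at this
      linarith
    have h5 : L ≤ h (z n) := hLle n
    rw [dist_eq_norm]
    nlinarith
  obtain ⟨zz, hzz⟩ := cauchySeq_tendsto_of_complete hcauchy
  have hzzX : zz ∈ X := hXc.mem_of_tendsto hzz (Eventually.of_forall hzX)
  -- (6) zz ∈ S (z n)
  have h6 : ∀ n, h zz + ε * ‖zz - z n‖ ≤ h (z n) := by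
    intro n
    have hseq : Tendsto z atTop (𝓝[X] zz) := by
      rw [tendsto_nhdsWithin_iff]
      exact ⟨hzz, Eventually.of_forall hzX⟩
    have hA : Tendsto (fun k => h (z n) - ε * ‖z k - z n‖) atTop
        (𝓝 (h (z n) - ε * ‖zz - z n‖)) := by
      apply Tendsto.sub tendsto_const_nhds
      exact (Tendsto.norm ((hzz.sub tendsto_const_nhds))).const_mul ε
    have key : ∀ c, c < h zz → c ≤ h (z n) - ε * ‖zz - z n‖ := by
      intro c hc
      have hev1 : ∀ᶠ k in atTop, c < h (z k) := hseq.eventually (hlsc zz hzzX c hc)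
      have hev2 : ∀ᶠ k in atTop, h (z k) ≤ h (z n) - ε * ‖z k - z n‖ := by
        filter_upwards [eventually_ge_atTop n] with k hk
        have := htel n k hk; linarith
      exact ge_of_tendsto hA (by filter_upwards [hev1, hev2] with k a1 a2; linarith)
    by_contra hcon
    push_neg at hcon
    have : (h zz + (h (z n) - ε * ‖zz - z n‖)) / 2 ≤ h (z n) - ε * ‖zz - z n‖ :=
      key _ (by linarith)
    linarith
  have hzzL : h zz ≤ L := by
    refine le_ciInf fun n => ?_
    have := h6 n; nlinarith [norm_nonneg (zz - z n), hε.le]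
  refine ⟨zz, hzzX, ?_, ?_⟩
  · have := h6 0
    rw [hz0] at this
    have hbzz : b ≤ h zz := hb zz hzzX
    nlinarith
  · intro y hy
    by_contra hcon
    push_neg at hcon
    -- h y + ε ‖y - zz‖ < h zz
    have hyS : ∀ n, y ∈ S (z n) := by
      intro n
      refine ⟨hy, ?_⟩
      have tri : ‖y - z n‖ ≤ ‖y - zz‖ + ‖zz - z n‖ := by
        simpa using norm_sub_le_norm_sub_add_norm_sub y zz (z n)
      have := h6 n
      nlinarith [hε.le]
    have hLy : L ≤ h y := by
      have hev : Tendsto (fun n => h (z (n+1))) atTop (𝓝 L) :=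
        hLtend.comp (tendsto_add_atTop_nat 1)
      have : ∀ n, h (z (n+1)) ≤ h y + (1/2)^n := by
        intro n
        calc h (z (n+1)) ≤ sInf (h '' S (z n)) + (1/2)^n := h2 n
          _ ≤ h y + (1/2)^n := by
              have : sInf (h '' S (z n)) ≤ h y := csInf_le (hbdd _) ⟨y, hyS n, rfl⟩
              linarith
      have hto : Tendsto (fun n : ℕ => h y + (1/2:ℝ)^n) atTop (𝓝 (h y + 0)) :=
        tendsto_const_nhds.add (tendsto_pow_atTop_nhds_zero_of_lt_one (by norm_num) (by norm_num))
      rw [add_zero] at hto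
      exact le_of_tendsto_of_tendsto' hev hto this
    have : h zz ≤ h y := hzzL.trans hLy
    nlinarith [norm_nonneg (y - zz), hε.le]

set_option maxHeartbeats 2000000 in
/-- Boundedness of the sublevel-type points. -/
lemma key_bound {f : H → ℝ} {g : H → H} {dom : Set H}
    (hdomConv : Convex ℝ dom) (hconv : ConvexOn ℝ dom f)
    (hlsc : LowerSemicontinuousOn f dom)
    (hdiff : ∀ x ∈ interior dom, GateauxAt f (g x) x)
    {c : H} (hc : c ∈ interior dom)
    {δ R r : ℝ} (hδ : 0 < δ) (hr : 0 < r)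
    (hball : Metric.closedBall c r ⊆ interior dom)
    (hSR : {x : H | ∃ v ∈ Metric.closedBall (g c) δ, v ∈ subdiff f dom x} ⊆
      Metric.closedBall 0 R)
    {M : ℝ} (hM : 0 ≤ M)
    {w : H} (hw : w ∈ interior dom)
    (hwM : f w - f c - ⟪g c, w - c⟫ ≤ M) :
    ‖w‖ ≤ (r/4 + R + ‖c‖) / min (1/2) (δ*r/(4*(M+1))) + ‖c‖ := by
  classical
  set u := g c with hu
  set h : H → ℝ := fun y => f y - ⟪u, y⟫ with hh
  have hcdom : c ∈ dom := interior_subset hc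
  have hwdom : w ∈ dom := interior_subset hw
  have hintconv : Convex ℝ (interior dom) := hdomConv.interior
  -- h has min at c over dom
  have hmin : ∀ y ∈ dom, h c ≤ h y := by
    intro y hy
    have := gateaux_subgrad hconv hcdom (hdiff c hc) y hy
    rw [inner_sub_right] at this
    simp only [hh]
    linarith
  -- convexity of h
  have hconvh : ∀ a b : H, a ∈ dom → b ∈ dom → ∀ s : ℝ, 0 ≤ s → s ≤ 1 →
      h ((1-s) • a + s • b) ≤ (1-s) * h a + s * h b := by
    intro a b ha hb s hs0 hs1
    have := hconv.2 ha hb (show (0:ℝ) ≤ 1 - s by linarith) hs0 (by ring)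
    simp only [smul_eq_mul] at this
    simp only [hh]
    rw [inner_add_right, inner_smul_right, inner_smul_right]
    nlinarith
  set t := min (1/2 : ℝ) (δ*r/(4*(M+1))) with ht
  have ht0 : 0 < t := lt_min (by norm_num) (by positivity)
  have ht1 : t ≤ 1/2 := min_le_left _ _
  have ht2 : t ≤ δ*r/(4*(M+1)) := min_le_right _ _
  set m := c + t • (w - c) with hm
  have hmc : m = (1-t) • c + t • w := by rw [hm, smul_sub, sub_smul, one_smul]; abel
  set X := Metric.closedBall m (r/2) with hX
  clear_value u h t
  -- X ⊆ interior dom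
  have hXint : X ⊆ interior dom := by
    intro y hy
    rw [Metric.mem_closedBall, dist_eq_norm] at hy
    have h1t : (1:ℝ)/2 ≤ 1 - t := by linarith
    have hyw : y = (1-t) • (c + (1/(1-t)) • (y - m)) + t • w := by
      rw [smul_add, smul_smul, mul_one_div_cancel (by linarith : (0:ℝ) < 1 - t).ne', one_smul, hmc]
      abel
    have hc2 : c + (1/(1-t)) • (y - m) ∈ Metric.closedBall c r := by
      rw [Metric.mem_closedBall, dist_eq_norm]
      have : ‖(1/(1-t)) • (y - m)‖ = (1/(1-t)) * ‖y - m‖ := by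
        rw [norm_smul, Real.norm_eq_abs, abs_of_pos (one_div_pos.2 (by linarith : (0:ℝ) < 1 - t))]
      have hle : (1/(1-t)) * ‖y - m‖ ≤ 2 * (r/2) := by
        have h2 : 1/(1-t) ≤ 2 := by
          rw [div_le_iff₀ (by linarith)]; linarith
        have := norm_nonneg (y - m)
        nlinarith
      simp only [add_sub_cancel_left]
      rw [this]; linarith
    rw [hyw]
    exact hintconv (hball hc2) hw (by linarith) ht0.le (by ring)
  have hXdom : X ⊆ dom := fun y hy => interior_subset (hXint hy)
  have hmX : m ∈ X := Metric.mem_closedBall_self (by positivity)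
  -- value bound at m
  have hmval : h m ≤ h c + δ * (r/4) := by
    have := hconvh c w hcdom hwdom t ht0.le (by linarith)
    rw [← hmc] at this
    have hwh : h w - h c ≤ M := by
      simp only [hh]
      rw [inner_sub_right] at hwM
      linarith
    have htM : t * M ≤ δ * (r/4) := by
      have h2 : t ≤ δ*r/(4*(M+1)) := ht2
      have : t * M ≤ (δ*r/(4*(M+1))) * M := by nlinarith
      have h3 : (δ*r/(4*(M+1))) * M ≤ δ * (r/4) := by
        rw [div_mul_eq_mul_div, div_le_iff₀ (by positivity)]
        nlinarith
      linarith
    have e1 : (1-t) * h c + t * h w = h c + t * (h w - h c) := by ring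
    have e2 : t * (h w - h c) ≤ t * M := mul_le_mul_of_nonneg_left hwh ht0.le
    linarith
  -- apply Ekeland
  have hlscX : ∀ y ∈ X, LowerSemicontinuousWithinAt h X y := by
    intro y hy
    have h1 : LowerSemicontinuousWithinAt f X y :=
      (hlsc y (hXdom hy)).mono hXdom
    have h2 : LowerSemicontinuousWithinAt (fun z => -⟪u, z⟫) X y :=
      (Continuous.lowerSemicontinuous ((continuous_const.inner continuous_id).neg)).lowerSemicontinuousWithinAt X y
    rw [hh]
    simpa only [sub_eq_add_neg] using h1.add h2
  obtain ⟨z, hzX, hzm, hzmin⟩ := ekeland_aux Metric.isClosed_closedBall hmX hlscX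
    (fun y hy => hmin y (hXdom hy)) hδ (by positivity : (0:ℝ) < r/4)
    (by linarith)
  have hzint : z ∈ interior dom := hXint hzX
  have hzdom : z ∈ dom := interior_subset hzint
  rw [Metric.mem_closedBall, dist_eq_norm] at hzX
  -- extend minimality to all of dom
  have hglobal : ∀ y ∈ dom, h z ≤ h y + δ * ‖y - z‖ := by
    intro y hy
    rcases eq_or_ne y z with rfl | hne
    · simp
    have hnorm : 0 < ‖y - z‖ := by
      rw [norm_pos_iff, sub_ne_zero]; exact hne
    set s := min 1 ((r/4) / ‖y - z‖) with hs
    have hs0 : 0 < s := lt_min one_pos (by positivity)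
    have hs1 : s ≤ 1 := min_le_left _ _
    have hsn : s * ‖y - z‖ ≤ r/4 := by
      have := min_le_right 1 ((r/4) / ‖y - z‖)
      calc s * ‖y - z‖ ≤ ((r/4) / ‖y - z‖) * ‖y - z‖ := by nlinarith
        _ = r/4 := by field_simp
    set ys := (1-s) • z + s • y with hys
    have hysdom : ys ∈ dom := hdomConv hzdom hy (by linarith) hs0.le (by ring)
    have hysX : ys ∈ X := by
      rw [Metric.mem_closedBall, dist_eq_norm]
      have : ys - m = (z - m) + s • (y - z) := by
        rw [hys, sub_smul, one_smul]; rw [smul_sub]; abel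
      rw [this]
      calc ‖(z - m) + s • (y - z)‖ ≤ ‖z - m‖ + ‖s • (y - z)‖ := norm_add_le _ _
        _ ≤ r/4 + s * ‖y - z‖ := by
            rw [norm_smul, Real.norm_eq_abs, abs_of_pos hs0]
            linarith
        _ ≤ r/2 := by linarith
    have hek := hzmin ys hysX
    have hconvs := hconvh z y hzdom hy s hs0.le hs1
    rw [← hys] at hconvs
    have hysz : ‖ys - z‖ = s * ‖y - z‖ := by
      have : ys - z = s • (y - z) := by rw [hys, sub_smul, one_smul, smul_sub]; abel
      rw [this, norm_smul, Real.norm_eq_abs, abs_of_pos hs0]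
    rw [hysz] at hek
    have : s * h z ≤ s * h y + δ * (s * ‖y - z‖) := by nlinarith
    have h2 : h z ≤ h y + δ * ‖y - z‖ := by
      have := mul_le_mul_of_nonneg_left (le_refl (0:ℝ)) hs0.le
      nlinarith
    exact h2
  -- gradient bound at z
  have hgz : ‖g z - u‖ ≤ δ := by
    have hgrad : ∀ v : H, ⟪u, v⟫ - δ * ‖v‖ ≤ ⟪g z, v⟫ := by
      intro v
      obtain ⟨ρ, hρ0, hρ⟩ := Metric.isOpen_iff.1 isOpen_interior z hzint
      have key := gateaux_tendsto_right (hdiff z hzint) v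
      have hbd : ∀ᶠ s in 𝓝[>] (0:ℝ), ⟪u, v⟫ - δ * ‖v‖ ≤ (f (z + s • v) - f z) / s := by
        have hmem : Set.Ioo 0 (ρ / (‖v‖ + 1)) ∈ 𝓝[>] (0:ℝ) :=
          Ioo_mem_nhdsGT_of_mem (Set.mem_Ico.2 ⟨le_refl _, by positivity⟩)
        filter_upwards [hmem] with s hs
        obtain ⟨hs0, hsρ⟩ := hs
        have hzv : z + s • v ∈ dom := by
          apply interior_subset; apply hρ
          rw [Metric.mem_ball, dist_eq_norm, add_sub_cancel_left, norm_smul,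
            Real.norm_eq_abs, abs_of_pos hs0]
          calc s * ‖v‖ ≤ s * (‖v‖ + 1) := by nlinarith
            _ < ρ / (‖v‖+1) * (‖v‖+1) := by
                have : (0:ℝ) < ‖v‖ + 1 := by positivity
                nlinarith
            _ = ρ := by field_simp
        have := hglobal (z + s • v) hzv
        have hnv : ‖z + s • v - z‖ = s * ‖v‖ := by
          rw [add_sub_cancel_left, norm_smul, Real.norm_eq_abs, abs_of_pos hs0]
        rw [hnv] at this
        simp only [hh] at this
        rw [inner_add_right, inner_smul_right] at this
        rw [le_div_iff₀ hs0]
        nlinarith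
      exact ge_of_tendsto key hbd
    have := hgrad (u - g z)
    rw [inner_sub_right, inner_sub_right] at this
    have hid : ⟪u,u⟫ - ⟪u, g z⟫ - (⟪g z, u⟫ - ⟪g z, g z⟫) = ‖u - g z‖^2 := by
      rw [norm_sub_sq_real, real_inner_comm u (g z)]
      ring_nf
      rw [real_inner_self_eq_norm_sq, real_inner_self_eq_norm_sq]
      ring
    have h2 : ‖u - g z‖^2 ≤ δ * ‖u - g z‖ := by nlinarith
    rcases eq_or_lt_of_le (norm_nonneg (u - g z)) with h3 | h3
    · rw [← norm_neg, neg_sub]; rw [← h3]; exact hδ.le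
    · rw [← norm_neg, neg_sub]; nlinarith
  -- z is in the bounded set
  have hzS : z ∈ Metric.closedBall (0:H) R := by
    apply hSR
    refine ⟨g z, ?_, hzdom, gateaux_subgrad hconv hzdom (hdiff z hzint)⟩
    rw [Metric.mem_closedBall, dist_eq_norm]; exact hgz
  rw [Metric.mem_closedBall, dist_zero_right] at hzS
  -- conclude
  have hmc' : ‖m - c‖ = t * ‖w - c‖ := by
    rw [hm, add_sub_cancel_left, norm_smul, Real.norm_eq_abs, abs_of_pos ht0]
  have hmz : ‖m‖ ≤ r/4 + R := by
    calc ‖m‖ ≤ ‖m - z‖ + ‖z‖ := by simpa using norm_add_le (m - z) z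
      _ ≤ r/4 + R := by rw [← norm_neg, neg_sub]; linarith
  have h6 : t * ‖w - c‖ ≤ r/4 + R + ‖c‖ := by
    calc t * ‖w - c‖ = ‖m - c‖ := hmc'.symm
      _ ≤ ‖m‖ + ‖c‖ := by simpa [sub_eq_add_neg] using norm_add_le m (-c)
      _ ≤ r/4 + R + ‖c‖ := by linarith
  have h7 : ‖w - c‖ ≤ (r/4 + R + ‖c‖) / t := by
    rw [le_div_iff₀ ht0]; linarith [mul_comm t ‖w - c‖]
  calc ‖w‖ ≤ ‖w - c‖ + ‖c‖ := by simpa using norm_add_le (w - c) c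
    _ ≤ (r/4 + R + ‖c‖) / t + ‖c‖ := by linarith

set_option maxHeartbeats 1000000 in
/-- Every bounded sequence in a real Hilbert space has a weakly convergent subsequence. -/
lemma exists_weak_subseq {y : ℕ → H} {B : ℝ} (hB : ∀ k, ‖y k‖ ≤ B) :
    ∃ (p : H) (φ : ℕ → ℕ), StrictMono φ ∧
      ∀ u : H, Tendsto (fun k => ⟪y (φ k), u⟫) atTop (𝓝 ⟪p, u⟫) := by
  classical
  have hB0 : 0 ≤ B := (norm_nonneg (y 0)).trans (hB 0)
  set B2 := B * B with hB2
  set T : ℕ → (ℕ → ℝ) := fun k i => ⟪y k, y i⟫ with hT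
  set K : Set (ℕ → ℝ) := Set.univ.pi (fun _ => Set.Icc (-B2) B2) with hK
  have hKc : IsCompact K := isCompact_univ_pi (fun _ => isCompact_Icc)
  have hTK : ∀ k, T k ∈ K := by
    intro k
    intro i _
    have h1 : |(⟪y k, y i⟫ : ℝ)| ≤ ‖y k‖ * ‖y i‖ := abs_real_inner_le_norm _ _
    have h2 : ‖y k‖ * ‖y i‖ ≤ B * B :=
      mul_le_mul (hB k) (hB i) (norm_nonneg _) hB0
    constructor
    · have := (abs_le.1 (h1.trans h2)).1; simpa [hT, hB2] using this
    · have := (abs_le.1 (h1.trans h2)).2; simpa [hT, hB2] using this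
  obtain ⟨a, _, φ, hφ, hconv⟩ := hKc.isSeqCompact hTK
  have hpt : ∀ i, Tendsto (fun k => ⟪y (φ k), y i⟫) atTop (𝓝 (a i)) := by
    intro i
    have := (tendsto_pi_nhds.1 hconv) i
    simpa [hT, Function.comp] using this
  -- the closed span
  set M : Submodule ℝ H := (Submodule.span ℝ (Set.range y)).topologicalClosure with hM
  have hyM : ∀ k, y k ∈ M :=
    fun k => (Submodule.span ℝ (Set.range y)).le_topologicalClosure
      (Submodule.subset_span ⟨k, rfl⟩)
  haveI : CompleteSpace M :=
    (Submodule.isClosed_topologicalClosure _).completeSpace_coe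
  -- every inner product sequence converges on the span
  have hspan : ∀ v ∈ Submodule.span ℝ (Set.range y),
      ∃ L : ℝ, Tendsto (fun k => ⟪y (φ k), v⟫) atTop (𝓝 L) := by
    intro v hv
    induction hv using Submodule.span_induction with
    | mem v hv => obtain ⟨i, rfl⟩ := hv; exact ⟨a i, hpt i⟩
    | zero => exact ⟨0, by simpa using tendsto_const_nhds⟩
    | add v w _ _ ihv ihw =>
      obtain ⟨Lv, hLv⟩ := ihv; obtain ⟨Lw, hLw⟩ := ihw
      exact ⟨Lv + Lw, by simpa [inner_add_right] using hLv.add hLw⟩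
    | smul r v _ ihv =>
      obtain ⟨Lv, hLv⟩ := ihv
      exact ⟨r * Lv, by simpa [real_inner_smul_right] using hLv.const_mul r⟩
  -- every inner product sequence is Cauchy
  have hcauchy : ∀ v : H, ∃ L : ℝ, Tendsto (fun k => ⟪y (φ k), v⟫) atTop (𝓝 L) := by
    intro v
    set w : H := (M.orthogonalProjectionOnto v : H) with hw
    have hvw : ∀ k, ⟪y k, v⟫ = ⟪y k, w⟫ := by
      intro k
      have hmem : v - w ∈ Mᗮ := Submodule.sub_starProjection_mem_orthogonal (K := M) v
      have := hmem (y k) (hyM k)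
      have h2 : ⟪y k, v - w⟫ = 0 := this
      rw [inner_sub_right] at h2
      linarith
    have hwM : w ∈ M := (M.orthogonalProjectionOnto v).2
    -- w is a limit of elements of the span
    have hcau : CauchySeq (fun k => ⟪y (φ k), w⟫) := by
      rw [Metric.cauchySeq_iff]
      intro ε hε
      have hwcl : w ∈ closure ((Submodule.span ℝ (Set.range y) : Submodule ℝ H) : Set H) := by
        rw [hM] at hwM; exact hwM
      obtain ⟨w', hw'span, hw'⟩ := Metric.mem_closure_iff.1 hwcl (ε / (4 * (B+1)))
        (by positivity)
      obtain ⟨L, hL⟩ := hspan w' hw'span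
      have hc : CauchySeq (fun k => ⟪y (φ k), w'⟫) := hL.cauchySeq
      rw [Metric.cauchySeq_iff] at hc
      obtain ⟨N, hN⟩ := hc (ε/2) (by positivity)
      refine ⟨N, fun m hm n hn => ?_⟩
      have key : ∀ k, |(⟪y (φ k), w⟫ : ℝ) - ⟪y (φ k), w'⟫| ≤ ε / 4 := by
        intro k
        rw [← inner_sub_right]
        calc |(⟪y (φ k), w - w'⟫ : ℝ)| ≤ ‖y (φ k)‖ * ‖w - w'‖ := abs_real_inner_le_norm _ _
          _ ≤ B * (ε / (4 * (B+1))) := by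
              have hd : ‖w - w'‖ ≤ ε / (4 * (B+1)) := by
                rw [← dist_eq_norm]; exact hw'.le
              exact mul_le_mul (hB _) hd (norm_nonneg _) hB0
          _ ≤ ε / 4 := by
              have h5 : B * (ε / (4 * (B+1))) ≤ (B+1) * (ε / (4*(B+1))) := by
                have : (0:ℝ) ≤ ε / (4 * (B+1)) := by positivity
                nlinarith
              have h6 : (B+1) * (ε / (4*(B+1))) = ε / 4 := by
                field_simp
              linarith
      have h3 := hN m hm n hn
      rw [Real.dist_eq] at h3 ⊢
      have k1 := key m; have k2 := key n
      have t1 : |(⟪y (φ m), w⟫ : ℝ) - ⟪y (φ n), w⟫| ≤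
          |(⟪y (φ m), w⟫ : ℝ) - ⟪y (φ m), w'⟫| + |(⟪y (φ m), w'⟫ : ℝ) - ⟪y (φ n), w'⟫|
            + |(⟪y (φ n), w'⟫ : ℝ) - ⟪y (φ n), w⟫| := by
        have := abs_sub_le (⟪y (φ m), w⟫ : ℝ) (⟪y (φ m), w'⟫ : ℝ) (⟪y (φ n), w⟫ : ℝ)
        have h7 := abs_sub_le (⟪y (φ m), w'⟫ : ℝ) (⟪y (φ n), w'⟫ : ℝ) (⟪y (φ n), w⟫ : ℝ)
        linarith
      have t2 : |(⟪y (φ n), w'⟫ : ℝ) - ⟪y (φ n), w⟫| = |(⟪y (φ n), w⟫ : ℝ) - ⟪y (φ n), w'⟫| :=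
        abs_sub_comm _ _
      rw [t2] at t1
      linarith
    obtain ⟨L, hL⟩ := cauchySeq_tendsto_of_complete hcau
    refine ⟨L, ?_⟩
    have : (fun k => (⟪y (φ k), v⟫ : ℝ)) = fun k => ⟪y (φ k), w⟫ := by
      funext k; exact hvw (φ k)
    rw [this]; exact hL
  -- build the linear functional
  choose Lf hLf using hcauchy
  have hadd : ∀ v w : H, Lf (v + w) = Lf v + Lf w := by
    intro v w
    refine tendsto_nhds_unique (hLf (v + w)) ?_
    simpa [inner_add_right] using (hLf v).add (hLf w)
  have hsmul : ∀ (r : ℝ) (v : H), Lf (r • v) = r * Lf v := by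
    intro r v
    refine tendsto_nhds_unique (hLf (r • v)) ?_
    simpa [real_inner_smul_right] using (hLf v).const_mul r
  have hbound : ∀ v : H, |Lf v| ≤ B * ‖v‖ := by
    intro v
    have : Tendsto (fun k => |(⟪y (φ k), v⟫ : ℝ)|) atTop (𝓝 |Lf v|) := (hLf v).abs
    refine le_of_tendsto this (Eventually.of_forall fun k => ?_)
    calc |(⟪y (φ k), v⟫ : ℝ)| ≤ ‖y (φ k)‖ * ‖v‖ := abs_real_inner_le_norm _ _
      _ ≤ B * ‖v‖ := mul_le_mul_of_nonneg_right (hB _) (norm_nonneg _)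
  let Lmap : H →ₗ[ℝ] ℝ :=
    { toFun := Lf, map_add' := hadd, map_smul' := by intro r v; simpa using hsmul r v }
  let Lcl : H →L[ℝ] ℝ := LinearMap.mkContinuous Lmap B (fun v => by
    rw [Real.norm_eq_abs]; exact hbound v)
  set p := (InnerProductSpace.toDual ℝ H).symm Lcl with hp
  refine ⟨p, φ, hφ, fun u => ?_⟩
  have hpu : (⟪p, u⟫ : ℝ) = Lf u := by
    rw [hp, InnerProductSpace.toDual_symm_apply]; rfl
  rw [hpu]; exact hLf u

theorem stmt4 (f : H → ℝ) (g : H → H) (dom : Set H) (C : Set H)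
    (hdomConv : Convex ℝ dom) (hconv : ConvexOn ℝ dom f)
    (hlsc : LowerSemicontinuousOn f dom) (hproper : dom.Nonempty)
    (hint : (interior dom).Nonempty)
    (hdiff : ∀ x ∈ interior dom, GateauxAt f (g x) x)
    (hesc : EssStrictConvex f dom)
    (hC : IsClosed C) (hCconv : Convex ℝ C) (hCne : (C ∩ interior dom).Nonempty)
    (x : ℕ → H) (hmono : FwdBregmanMono f g dom C x) :
    (∃ p ∈ C ∩ interior dom, WeakLim x p) ↔
      ∀ p : H, (∃ φ : ℕ → ℕ, StrictMono φ ∧ WeakLim (x ∘ φ) p) →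
        p ∈ C ∩ interior dom := by
  classical
  obtain ⟨hCne', hxint, hmono'⟩ := hmono
  have hsub : ∀ z ∈ interior dom, ∀ y ∈ dom, f z + ⟪g z, y - z⟫ ≤ f y :=
    fun z hz => gateaux_subgrad hconv (interior_subset hz) (hdiff z hz)
  have hnonneg : ∀ w ∈ dom, ∀ c ∈ interior dom, 0 ≤ bregD f g w c := by
    intro w hw c hc
    have := hsub c hc w hw
    simp only [bregD]; linarith
  have hanti : ∀ c ∈ C ∩ interior dom, Antitone fun k => bregD f g (x k) c :=
    fun c hc => antitone_nat_of_succ_le (fun k => hmono' c hc k)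
  have hDlim : ∀ c ∈ C ∩ interior dom,
      ∃ L, Tendsto (fun k => bregD f g (x k) c) atTop (𝓝 L) := by
    intro c hc
    exact ⟨_, tendsto_atTop_ciInf (hanti c hc)
      ⟨0, fun r ⟨k, hk⟩ => hk ▸ hnonneg _ (interior_subset (hxint k)) c hc.2⟩⟩
  -- uniqueness of weak sequential cluster points lying in C ∩ interior dom
  have huniq : ∀ p q : H, p ∈ C ∩ interior dom → q ∈ C ∩ interior dom →
      (∃ φ : ℕ → ℕ, StrictMono φ ∧ WeakLim (x ∘ φ) p) →
      (∃ ψ : ℕ → ℕ, StrictMono ψ ∧ WeakLim (x ∘ ψ) q) → p = q := by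
    rintro p q hp hq ⟨φ, hφ, hwp⟩ ⟨ψ, hψ, hwq⟩
    by_contra hne
    obtain ⟨Lp, hLp⟩ := hDlim p hp
    obtain ⟨Lq, hLq⟩ := hDlim q hq
    set c0 : ℝ := f q - f p - ⟪g q, q⟫ + ⟪g p, p⟫ with hc0
    have hform : (fun k => (⟪x k, g p - g q⟫ : ℝ)) =
        fun k => (bregD f g (x k) q - bregD f g (x k) p) + c0 := by
      funext k
      simp only [bregD, hc0, inner_sub_right]
      rw [real_inner_comm (x k) (g p), real_inner_comm (x k) (g q)]
      ring
    have hL : Tendsto (fun k => (⟪x k, g p - g q⟫ : ℝ)) atTop (𝓝 ((Lq - Lp) + c0)) := by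
      rw [hform]
      exact (hLq.sub hLp).add tendsto_const_nhds
    have h1 : (⟪p, g p - g q⟫ : ℝ) = (Lq - Lp) + c0 :=
      tendsto_nhds_unique (hwp (g p - g q)) (hL.comp hφ.tendsto_atTop)
    have h2 : (⟪q, g p - g q⟫ : ℝ) = (Lq - Lp) + c0 :=
      tendsto_nhds_unique (hwq (g p - g q)) (hL.comp hψ.tendsto_atTop)
    -- strict monotonicity of the gradient contradicts h1 = h2
    have hsegint : segment ℝ p q ⊆ interior dom :=
      hdomConv.interior.segment_subset hp.2 hq.2
    have hseg : segment ℝ p q ⊆ {z : H | (subdiff f dom z).Nonempty} := by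
      intro z hz
      have hzint : z ∈ interior dom := hsegint hz
      exact ⟨g z, interior_subset hzint, hsub z hzint⟩
    have hstrict := hesc.2 _ hseg (convex_segment p q)
    set m : H := (1/2 : ℝ) • p + (1/2 : ℝ) • q with hm
    have hmseg : m ∈ segment ℝ p q :=
      ⟨1/2, 1/2, by norm_num, by norm_num, by norm_num, rfl⟩
    have hmid : f m < (1/2 : ℝ) * f p + (1/2 : ℝ) * f q := by
      have := hstrict.2 (left_mem_segment ℝ p q) (right_mem_segment ℝ p q) hne
        (by norm_num : (0:ℝ) < 1/2) (by norm_num : (0:ℝ) < 1/2) (by norm_num)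
      rw [hm]
      simpa [smul_eq_mul] using this
    have hmdom : m ∈ dom := interior_subset (hsegint hmseg)
    have hsp := hsub p hp.2 m hmdom
    have hsq := hsub q hq.2 m hmdom
    have hmp : m - p = (1/2 : ℝ) • (q - p) := by
      rw [hm, smul_sub]; module
    have hmq : m - q = (1/2 : ℝ) • (p - q) := by
      rw [hm, smul_sub]; module
    rw [hmp, real_inner_smul_right] at hsp
    rw [hmq, real_inner_smul_right] at hsq
    simp only [inner_sub_right] at h1 h2 hsp hsq
    have e1 := real_inner_comm p (g p)
    have e2 := real_inner_comm p (g q)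
    have e3 := real_inner_comm q (g p)
    have e4 := real_inner_comm q (g q)
    linarith
  -- boundedness of the sequence
  obtain ⟨c, hcC, hcint⟩ := hCne
  have hcdom : c ∈ dom := interior_subset hcint
  obtain ⟨δ, hδ, hSbd⟩ := hesc.1 (g c) ⟨c, hcdom, hsub c hcint⟩
  obtain ⟨R, hSR⟩ := (Metric.isBounded_iff_subset_closedBall 0).1 hSbd
  obtain ⟨ρ, hρ0, hρ⟩ := Metric.isOpen_iff.1 isOpen_interior c hcint
  have hball : Metric.closedBall c (ρ/2) ⊆ interior dom :=
    (Metric.closedBall_subset_ball (by linarith)).trans hρ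
  set M : ℝ := bregD f g (x 0) c with hMdef
  have hM : 0 ≤ M := hnonneg _ (interior_subset (hxint 0)) c hcint
  set B : ℝ := (ρ/2/4 + R + ‖c‖) / min (1/2) (δ*(ρ/2)/(4*(M+1))) + ‖c‖ with hB
  have hbound : ∀ k, ‖x k‖ ≤ B := by
    intro k
    have hwM : f (x k) - f c - ⟪g c, x k - c⟫ ≤ M := by
      have h3 : bregD f g (x k) c ≤ bregD f g (x 0) c := hanti c ⟨hcC, hcint⟩ (Nat.zero_le k)
      simpa [bregD, hMdef] using h3
    exact key_bound hdomConv hconv hlsc hdiff hcint hδ (by positivity) hball hSR hM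
      (hxint k) hwM
  constructor
  · rintro ⟨p, hp, hwp⟩ q ⟨φ, hφ, hwq⟩
    have : q = p := by
      refine ext_inner_right ℝ (fun v => ?_)
      exact tendsto_nhds_unique (hwq v) ((hwp v).comp hφ.tendsto_atTop)
    rw [this]; exact hp
  · intro hall
    obtain ⟨p, φ, hφ, hwp⟩ := exists_weak_subseq hbound
    have hwp' : WeakLim (x ∘ φ) p := fun u => hwp u
    have hp : p ∈ C ∩ interior dom := hall p ⟨φ, hφ, hwp'⟩
    refine ⟨p, hp, ?_⟩
    intro u
    by_contra hnot
    have hfreq : ∃ ε > 0, ∃ᶠ k in atTop, ε ≤ |(⟪x k, u⟫ : ℝ) - ⟪p, u⟫| := by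
      by_contra hcon
      push_neg at hcon
      apply hnot
      rw [Metric.tendsto_atTop]
      intro ε hε
      have := hcon ε hε
      rw [Filter.eventually_atTop] at this
      obtain ⟨N, hN⟩ := this
      refine ⟨N, fun n hn => ?_⟩
      have := hN n hn
      rw [Real.dist_eq]
      exact this
    obtain ⟨ε, hε, hfr⟩ := hfreq
    obtain ⟨ψ, hψ, hψP⟩ := Filter.extraction_of_frequently_atTop hfr
    have hbound' : ∀ k, ‖(x ∘ ψ) k‖ ≤ B := fun k => hbound (ψ k)
    obtain ⟨q, φ', hφ', hwq⟩ := exists_weak_subseq hbound'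
    have hwq' : WeakLim (x ∘ (ψ ∘ φ')) q := fun v => hwq v
    have hq : q ∈ C ∩ interior dom := hall q ⟨ψ ∘ φ', hψ.comp hφ', hwq'⟩
    have hqp : q = p := huniq q p hq hp ⟨ψ ∘ φ', hψ.comp hφ', hwq'⟩ ⟨φ, hφ, hwp'⟩
    have htend : Tendsto (fun k => (⟪x (ψ (φ' k)), u⟫ : ℝ)) atTop (𝓝 ⟪p, u⟫) := by
      have := hwq' u
      rw [hqp] at this
      exact this
    have : ∀ᶠ k in atTop, |(⟪x (ψ (φ' k)), u⟫ : ℝ) - ⟪p, u⟫| < ε := by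
      have h4 := (Metric.tendsto_atTop.1 htend) ε hε
      obtain ⟨N, hN⟩ := h4
      rw [Filter.eventually_atTop]
      exact ⟨N, fun n hn => by have := hN n hn; rwa [Real.dist_eq] at this⟩
    obtain ⟨k, hk⟩ := this.exists
    exact absurd (hψP (φ' k)) (not_le.2 hk)
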